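/- Let π be an indecomposable 132-avoiding permutation and let λ = Λ(π) be the partition given by its Lehmer code. Then π avoids the pattern 3421 if and only if every part of λ, except possibly the smallest part size, has multiplicity one; equivalently, there do not exist indices i and j with λ_i = λ_{i+1} > λ_j > 0. -/

import Mathlib

/-- A permutation `π` of length `n` (as a bijection of `Fin n`, position `i` has value `π i`)
contains the pattern `p` of length `m` if some subsequence of `π` is order-isomorphic to `p`. -/
def Contains {n m : ℕ} (π : Equiv.Perm (Fin n)) (p : Equiv.Perm (Fin m)) : Prop :=
  ∃ f : Fin m → Fin n, StrictMono f ∧ ∀ a b : Fin m, π (f a) < π (f b) ↔ p a < p b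

/-- `π` avoids the pattern `p`. -/
def Avoids {n m : ℕ} (π : Equiv.Perm (Fin n)) (p : Equiv.Perm (Fin m)) : Prop :=
  ¬ Contains π p

/-- The number of inversions of `π`: pairs of positions `i < j` with `π i > π j`. -/
noncomputable def invCount {n : ℕ} (π : Equiv.Perm (Fin n)) : ℕ :=
  Nat.card {ij : Fin n × Fin n // ij.1 < ij.2 ∧ π ij.2 < π ij.1}

/-- The pattern 132. -/
def p132 : Equiv.Perm (Fin 3) := ⟨![0,2,1], ![0,2,1], by decide, by decide⟩

/-- `π` is indecomposable: it is not the direct sum of two nonempty permutations,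
i.e. there is no `0 < d < n` such that the first `d` positions carry the values `0, …, d-1`. -/
def Indecomposable {n : ℕ} (π : Equiv.Perm (Fin n)) : Prop :=
  ¬ ∃ d : ℕ, 0 < d ∧ d < n ∧ ∀ i : Fin n, (i : ℕ) < d → (π i : ℕ) < d

/-- The Lehmer code of `π` at position `i`: the number of positions `j > i` with
`π j < π i`.  For an indecomposable `132`-avoiding permutation the Lehmer code is
weakly decreasing and its nonzero entries form the partition `Λ(π)` of `inv(π)`. -/
noncomputable def lehmer {n : ℕ} (π : Equiv.Perm (Fin n)) (i : Fin n) : ℕ :=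
  Nat.card {j : Fin n // i < j ∧ π j < π i}

/-- The Lehmer code of `π`, extended by zeroes beyond position `n`; for an indecomposable
`132`-avoider this is exactly the partition `λ = Λ(π)` with the convention `λ_i = 0` for
indices `i` beyond the number of parts (indices are 0-based here). -/
noncomputable def lehmerExt {n : ℕ} (π : Equiv.Perm (Fin n)) (i : ℕ) : ℕ :=
  if h : i < n then lehmer π ⟨i, h⟩ else 0

def p3421 : Equiv.Perm (Fin 4) := ⟨![2,3,1,0], ![3,2,0,1], by decide, by decide⟩

section Aux
variable {n : ℕ} (π : Equiv.Perm (Fin n))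

lemma lehmer_eq (i : Fin n) :
    lehmer π i = (Finset.univ.filter (fun j => i < j ∧ π j < π i)).card := by
  rw [lehmer, Nat.card_eq_fintype_card, Fintype.card_subtype]

lemma contains132_of (a b c : Fin n) (hab : a < b) (hbc : b < c)
    (h1 : π a < π c) (h2 : π c < π b) : Contains π p132 := by
  have hac : a < c := hab.trans hbc
  have h3 : π a < π b := h1.trans h2
  refine ⟨![a,b,c], ?_, ?_⟩
  · intro x y hxy
    fin_cases x <;> fin_cases y <;> simp_all <;> exact absurd hxy (by decide)
  · intro x y
    fin_cases x <;> fin_cases y <;>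
      simp [p132, lt_asymm, lt_irrefl, h1, h2, h3, lt_asymm h1, lt_asymm h2, lt_asymm h3] <;>
      first
      | exact lt_asymm h1 | exact lt_asymm h2 | exact lt_asymm h3 | decide

lemma contains3421_of (a b c d : Fin n) (hab : a < b) (hbc : b < c) (hcd : c < d)
    (v1 : π d < π c) (v2 : π c < π a) (v3 : π a < π b) : Contains π p3421 := by
  have h1 : π d < π a := v1.trans v2
  have h2 : π d < π b := h1.trans v3
  have h3 : π c < π b := v2.trans v3
  refine ⟨![a,b,c,d], ?_, ?_⟩
  · intro x y hxy
    fin_cases x <;> fin_cases y <;>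
      simp_all [hab.trans hbc, hbc.trans hcd, (hab.trans hbc).trans hcd] <;>
      exact absurd hxy (by decide)
  · intro x y
    fin_cases x <;> fin_cases y <;>
      simp [p3421, v1, v2, v3, h1, h2, h3] <;>
      first
      | exact lt_asymm v1 | exact lt_asymm v2 | exact lt_asymm v3
      | exact lt_asymm h1 | exact lt_asymm h2 | exact lt_asymm h3
      | exact v1.le | exact v2.le | exact v3.le
      | exact h1.le | exact h2.le | exact h3.le | decide

lemma of_contains3421 (h : Contains π p3421) :
    ∃ a b c d : Fin n, a < b ∧ b < c ∧ c < d ∧ π d < π c ∧ π c < π a ∧ π a < π b := by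
  obtain ⟨f, hf, hp⟩ := h
  exact ⟨f 0, f 1, f 2, f 3, hf (by decide), hf (by decide), hf (by decide),
    (hp 3 2).mpr (by decide), (hp 2 0).mpr (by decide), (hp 0 1).mpr (by decide)⟩

lemma lehmer_pos {i : Fin n} (h : ∃ k, i < k ∧ π k < π i) : 0 < lehmer π i := by
  rw [lehmer_eq, Finset.card_pos]
  obtain ⟨k, hk⟩ := h
  exact ⟨k, by simpa using hk⟩

lemma exists_of_lehmer_pos {i : Fin n} (h : 0 < lehmer π i) : ∃ k, i < k ∧ π k < π i := by
  rw [lehmer_eq, Finset.card_pos] at h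
  obtain ⟨k, hk⟩ := h
  simp only [Finset.mem_filter] at hk
  exact ⟨k, hk.2⟩

lemma lehmer_mono (h132 : Avoids π p132) {i j : Fin n} (hij : i ≤ j) :
    lehmer π j ≤ lehmer π i := by
  rcases eq_or_lt_of_le hij with rfl | hij
  · exact le_rfl
  rw [lehmer_eq, lehmer_eq]
  apply Finset.card_le_card
  intro k hk
  simp only [Finset.mem_filter, Finset.mem_univ, true_and] at hk ⊢
  obtain ⟨hjk, hkj⟩ := hk
  refine ⟨hij.trans hjk, ?_⟩
  rcases lt_trichotomy (π i) (π j) with h | h | h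
  · by_contra hc
    push_neg at hc
    have hne : π i ≠ π k := fun he => absurd (π.injective he) (by rintro rfl; exact absurd hjk (lt_asymm hij))
    exact h132 (contains132_of π i j k hij hjk (lt_of_le_of_ne hc hne) hkj)
  · exact absurd (π.injective h) hij.ne
  · exact hkj.trans h

lemma lehmer_strict (h132 : Avoids π p132) {i j : Fin n} (hij : i < j) (hv : π j < π i) :
    lehmer π j < lehmer π i := by
  rw [lehmer_eq, lehmer_eq]
  apply Finset.card_lt_card
  constructor
  · intro k hk
    simp only [Finset.mem_filter, Finset.mem_univ, true_and] at hk ⊢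
    exact ⟨hij.trans hk.1, hk.2.trans hv⟩
  · intro hsub
    have := hsub (by simp [hij, hv] : j ∈ Finset.univ.filter (fun k => i < k ∧ π k < π i))
    simp at this

lemma lehmer_le_of (h132 : Avoids π p132) {i j : Fin n} (hij : i < j) (hv : π i < π j)
    (hno : ∀ k, i < k → k < j → ¬ π k < π i) : lehmer π i ≤ lehmer π j := by
  rw [lehmer_eq, lehmer_eq]
  apply Finset.card_le_card
  intro k hk
  simp only [Finset.mem_filter, Finset.mem_univ, true_and] at hk ⊢
  obtain ⟨hik, hki⟩ := hk
  have hkj : j < k := by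
    rcases lt_trichotomy k j with h | rfl | h
    · exact absurd hki (hno k hik h)
    · exact absurd hv (lt_asymm hki)
    · exact h
  exact ⟨hkj, hki.trans hv⟩

lemma exists_bad (h132 : Avoids π p132) :
    ∀ D : ℕ, ∀ a b c d : Fin n, (b : ℕ) - (a : ℕ) ≤ D → a < b → b < c → c < d →
      π d < π c → π c < π a → π a < π b →
      ∃ i j : ℕ, lehmerExt π i = lehmerExt π (i + 1) ∧
        lehmerExt π j < lehmerExt π i ∧ 0 < lehmerExt π j := by
  intro D
  induction D with
  | zero =>
    intro a b c d hD hab _ _ _ _ _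
    have : (a : ℕ) < b := hab
    omega
  | succ D ih =>
    intro a b c d hD hab hbc hcd v1 v2 v3
    by_cases hk : ∃ k : Fin n, a < k ∧ k < b ∧ π k < π a
    · obtain ⟨k, hak, hkb, hka⟩ := hk
      have hck : π c < π k := by
        rcases lt_trichotomy (π k) (π c) with h | h | h
        · exact absurd (contains132_of π k b c hkb hbc h (v2.trans v3)) h132
        · exact absurd (π.injective h) (by rintro rfl; exact absurd (hkb.trans hbc) (lt_irrefl _))
        · exact h
      have hD' : (b : ℕ) - (k : ℕ) ≤ D := by
        have h1 : (a : ℕ) < k := hak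
        omega
      exact ih k b c d hD' hkb hbc hcd v1 hck (hka.trans v3)
    · push_neg at hk
      have ha1 : (a : ℕ) + 1 < n := by
        have : (a : ℕ) < (b : ℕ) := hab
        have := b.isLt
        omega
      set A1 : Fin n := ⟨(a : ℕ) + 1, ha1⟩ with hA1
      have hA1b : A1 ≤ b := by
        have : (a : ℕ) < (b : ℕ) := hab
        simp only [Fin.le_def]
        exact this
      have haA1 : a ≤ A1 := Fin.le_def.mpr (Nat.le_succ _)
      have heq : lehmer π a = lehmer π A1 := by
        refine le_antisymm ?_ (lehmer_mono π h132 haA1)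
        exact le_trans (lehmer_le_of π h132 hab v3 (fun k ha hb => not_lt.mpr (hk k ha hb)))
          (lehmer_mono π h132 hA1b)
      have hc_lt : lehmer π c < lehmer π a :=
        lt_of_lt_of_le (lehmer_strict π h132 hbc (v2.trans v3)) (lehmer_mono π h132 hab.le)
      have hc_pos : 0 < lehmer π c := lehmer_pos π ⟨d, hcd, v1⟩
      refine ⟨(a : ℕ), (c : ℕ), ?_, ?_, ?_⟩
      · rw [lehmerExt, lehmerExt, dif_pos a.isLt, dif_pos ha1]
        simpa using heq
      · rw [lehmerExt, lehmerExt, dif_pos a.isLt, dif_pos c.isLt]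
        simpa using hc_lt
      · rw [lehmerExt, dif_pos c.isLt]
        simpa using hc_pos

lemma contains_of_bad (h132 : Avoids π p132) (i j : ℕ)
    (h1 : lehmerExt π i = lehmerExt π (i + 1))
    (h2 : lehmerExt π j < lehmerExt π i) (h3 : 0 < lehmerExt π j) :
    Contains π p3421 := by
  have hj : j < n := by
    by_contra h
    have hz : lehmerExt π j = 0 := dif_neg h
    omega
  have hi : i < n := by
    by_contra h
    have hz : lehmerExt π i = 0 := dif_neg h
    omega
  have hi1 : i + 1 < n := by
    by_contra h
    have hz : lehmerExt π (i + 1) = 0 := dif_neg h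
    omega
  set I : Fin n := ⟨i, hi⟩
  set I1 : Fin n := ⟨i + 1, hi1⟩
  set J : Fin n := ⟨j, hj⟩
  have e1 : lehmerExt π i = lehmer π I := dif_pos hi
  have e2 : lehmerExt π (i + 1) = lehmer π I1 := dif_pos hi1
  have e3 : lehmerExt π j = lehmer π J := dif_pos hj
  rw [e1, e2] at h1
  rw [e3, e1] at h2
  rw [e3] at h3
  have hII1 : I < I1 := Fin.lt_def.mpr (Nat.lt_succ_self _)
  have hI1J : I1 < J := by
    by_contra h
    push_neg at h
    exact absurd (h1 ▸ lehmer_mono π h132 h) (not_le.mpr h2)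
  have hIJ : I < J := hII1.trans hI1J
  have hvII1 : π I < π I1 := by
    rcases lt_trichotomy (π I) (π I1) with h | h | h
    · exact h
    · exact absurd (π.injective h) hII1.ne
    · exact absurd (h1 ▸ lehmer_strict π h132 hII1 h) (lt_irrefl _)
  obtain ⟨k, hJk, hkJ⟩ := exists_of_lehmer_pos π h3
  rcases lt_trichotomy (π J) (π I) with hv | hv | hv
  · exact contains3421_of π I I1 J k hII1 hI1J hJk hkJ hv hvII1
  · exact absurd (π.injective hv) hIJ.ne'
  · -- π I < π J
    have hkI : π k < π I := by
      rcases lt_trichotomy (π k) (π I) with h | h | h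
      · exact h
      · exact absurd (π.injective h) (hIJ.trans hJk).ne'
      · exact absurd (contains132_of π I J k hIJ hJk h hkJ) h132
    have hm : ∃ m : Fin n, I < m ∧ π m < π I ∧ m ≤ J := by
      by_contra h
      push_neg at h
      have hsub : lehmer π I ≤ lehmer π J := by
        rw [lehmer_eq, lehmer_eq]
        apply Finset.card_le_card
        intro m hm
        simp only [Finset.mem_filter, Finset.mem_univ, true_and] at hm ⊢
        exact ⟨h m hm.1 hm.2, hm.2.trans hv⟩
      exact absurd hsub (not_le.mpr h2)
    obtain ⟨m, hIm, hmI, hmJ⟩ := hm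
    have hmJ' : m < J := lt_of_le_of_ne hmJ (by rintro rfl; exact absurd hv (lt_asymm hmI))
    have hI1m : I1 < m := by
      rcases lt_trichotomy I1 m with h | h | h
      · exact h
      · exact absurd hmI (by rw [← h]; exact lt_asymm hvII1)
      · have : (m : ℕ) < i + 1 := h
        have : (i : ℕ) < m := hIm
        omega
    have hmk : m < k := hmJ'.trans hJk
    rcases lt_trichotomy (π k) (π m) with h | h | h
    · exact contains3421_of π I I1 m k hII1 hI1m hmk h hmI hvII1
    · exact absurd (π.injective h) hmk.ne'
    · exact absurd (contains132_of π m J k hmJ' hJk h hkJ) h132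

end Aux
/-- Let `π` be an indecomposable 132-avoiding permutation and `λ = Λ(π)` the partition
given by its Lehmer code (here `lehmerExt π`, with `λ_i = 0` beyond the parts).  Then `π`
avoids 3421 if and only if every part of `λ`, except possibly the smallest part size, has
multiplicity one; equivalently, there are no indices `i`, `j` with
`λ_i = λ_{i+1} > λ_j > 0`. -/

theorem avoids_3421_iff (n : ℕ) (π : Equiv.Perm (Fin n))
    (hind : Indecomposable π) (h132 : Avoids π p132) :
    Avoids π p3421 ↔
      ¬ ∃ i j : ℕ, lehmerExt π i = lehmerExt π (i + 1) ∧
        lehmerExt π j < lehmerExt π i ∧ 0 < lehmerExt π j := by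
  constructor
  · intro hav
    rintro ⟨i, j, h1, h2, h3⟩
    exact hav (contains_of_bad π h132 i j h1 h2 h3)
  · intro hno hcon
    obtain ⟨a, b, c, d, hab, hbc, hcd, v1, v2, v3⟩ := of_contains3421 π hcon
    exact hno (exists_bad π h132 ((b : ℕ) - (a : ℕ)) a b c d le_rfl hab hbc hcd v1 v2 v3)
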